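/- Let Z = ℤ[x,y,z] be the polynomial ring in three variables over ℤ, and consider the polynomials in Z[t]: P_1(t) = (x²y²z + t²)(x²yz² + (t−1)²) and P_2(t) = (xy²z² + t²)(x²y²z² + (t−1)²). Then P_1 and P_2 are nonzero and coprime in ℚ(x,y,z)[t]; the element xy²z is a gcd in Z of P_1(0) and P_2(0); the element x²yz² is a gcd in Z of P_1(1) and P_2(1); the element xyz is a gcd in Z of xy²z and x²yz²; and yet there is no m ∈ Z such that xyz is a gcd in Z of P_1(m) and P_2(m) (i.e., no m ∈ Z such that xyz divides both P_1(m) and P_2(m) and every common divisor of P_1(m) and P_2(m) divides xyz). In particular, the set { gcd(P_1(m), P_2(m)) : m ∈ Z } is not stable under gcd. -/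

import Mathlib

open MvPolynomial Polynomial

namespace GcdCounterexample

noncomputable abbrev Z3 : Type := MvPolynomial (Fin 3) ℤ

noncomputable def x : Z3 := MvPolynomial.X 0
noncomputable def y : Z3 := MvPolynomial.X 1
noncomputable def z : Z3 := MvPolynomial.X 2

noncomputable def P₁ : Polynomial Z3 :=
  (Polynomial.C (x ^ 2 * y ^ 2 * z) + Polynomial.X ^ 2) *
    (Polynomial.C (x ^ 2 * y * z ^ 2) + (Polynomial.X - 1) ^ 2)

noncomputable def P₂ : Polynomial Z3 :=
  (Polynomial.C (x * y ^ 2 * z ^ 2) + Polynomial.X ^ 2) *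
    (Polynomial.C (x ^ 2 * y ^ 2 * z ^ 2) + (Polynomial.X - 1) ^ 2)

/-- `d` is a gcd of `a` and `b`. -/
def IsGcdOf (d a b : Z3) : Prop :=
  d ∣ a ∧ d ∣ b ∧ ∀ e : Z3, e ∣ a → e ∣ b → e ∣ d

/-! ### Auxiliary material -/

noncomputable instance instNormZ3 : NormalizationMonoid Z3 :=
  UniqueFactorizationMonoid.normalizationMonoid.toNormalizationMonoid

noncomputable instance instGcdZ3 : NormalizedGCDMonoid Z3 :=
  UniqueFactorizationMonoid.toNormalizedGCDMonoid Z3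

lemma prime_X0 : Prime (MvPolynomial.X 0 : Z3) := by
  rw [← MulEquiv.prime_iff (MvPolynomial.finSuccEquiv ℤ 2).toMulEquiv]
  have e : (MvPolynomial.finSuccEquiv ℤ 2).toMulEquiv (MvPolynomial.X 0 : Z3) = Polynomial.X := by
    show MvPolynomial.finSuccEquiv ℤ 2 (MvPolynomial.X 0 : Z3) = Polynomial.X
    simp [MvPolynomial.finSuccEquiv_X_zero]
  rw [e]
  exact Polynomial.prime_X

lemma prime_Xi (i : Fin 3) : Prime (MvPolynomial.X i : Z3) := by
  have h0 := prime_X0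
  rw [← MulEquiv.prime_iff (MvPolynomial.renameEquiv ℤ (Equiv.swap (0 : Fin 3) i)).toMulEquiv] at h0
  have e : (MvPolynomial.renameEquiv ℤ (Equiv.swap (0 : Fin 3) i)).toMulEquiv
      (MvPolynomial.X 0 : Z3) = MvPolynomial.X i := by
    show MvPolynomial.renameEquiv ℤ (Equiv.swap (0 : Fin 3) i) (MvPolynomial.X 0 : Z3) = _
    simp [Equiv.swap_apply_left]
  rwa [e] at h0

noncomputable def σy : Z3 ≃ₐ[ℤ] Z3 :=
  AlgEquiv.ofAlgHom
    (MvPolynomial.aeval ![MvPolynomial.X 0, MvPolynomial.X 1 - 1, MvPolynomial.X 2])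
    (MvPolynomial.aeval ![MvPolynomial.X 0, MvPolynomial.X 1 + 1, MvPolynomial.X 2])
    (by apply MvPolynomial.algHom_ext; intro i; fin_cases i <;> simp)
    (by apply MvPolynomial.algHom_ext; intro i; fin_cases i <;> simp)

noncomputable def σz : Z3 ≃ₐ[ℤ] Z3 :=
  AlgEquiv.ofAlgHom
    (MvPolynomial.aeval ![MvPolynomial.X 0, MvPolynomial.X 1, MvPolynomial.X 2 - MvPolynomial.X 0])
    (MvPolynomial.aeval ![MvPolynomial.X 0, MvPolynomial.X 1, MvPolynomial.X 2 + MvPolynomial.X 0])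
    (by apply MvPolynomial.algHom_ext; intro i; fin_cases i <;> simp)
    (by apply MvPolynomial.algHom_ext; intro i; fin_cases i <;> simp)

lemma prime_y_sub_one : Prime (y - 1) := by
  have h := (MulEquiv.prime_iff σy.toMulEquiv (p := (MvPolynomial.X 1 : Z3))).mpr (prime_Xi 1)
  have e : σy.toMulEquiv (MvPolynomial.X 1 : Z3) = MvPolynomial.X 1 - 1 := by
    show MvPolynomial.aeval _ (MvPolynomial.X 1 : Z3) = _
    simp [σy]
  rwa [e] at h

lemma prime_z_sub_x : Prime (z - x) := by
  have h := (MulEquiv.prime_iff σz.toMulEquiv (p := (MvPolynomial.X 2 : Z3))).mpr (prime_Xi 2)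
  have e : σz.toMulEquiv (MvPolynomial.X 2 : Z3) = MvPolynomial.X 2 - MvPolynomial.X 0 := by
    show MvPolynomial.aeval _ (MvPolynomial.X 2 : Z3) = _
    simp [σz]
  rwa [e] at h

lemma not_dvd_of_eval {a b : Z3} (v : Fin 3 → ℤ) (ha : MvPolynomial.eval v a = 0)
    (hb : MvPolynomial.eval v b ≠ 0) : ¬ a ∣ b := by
  rintro ⟨c, rfl⟩
  rw [map_mul, ha, zero_mul] at hb
  exact hb rfl

lemma isCoprime_dvd_add_one {v w : Z3} (h : v ∣ w) : IsCoprime v (w + 1) := by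
  obtain ⟨c, rfl⟩ := h
  exact ⟨-c, 1, by ring⟩

lemma isCoprime_mono {N : Z3} (hx : x ∣ N) (hy : y ∣ N) (hz : z ∣ N) (i j k : ℕ) :
    IsCoprime (x ^ i * y ^ j * z ^ k) (N + 1) :=
  (((isCoprime_dvd_add_one hx).pow_left).mul_left
    ((isCoprime_dvd_add_one hy).pow_left)).mul_left ((isCoprime_dvd_add_one hz).pow_left)

lemma isUnit_gcd_of_isCoprime {a b : Z3} (h : IsCoprime a b) : IsUnit (gcd a b) :=
  h.isUnit_of_dvd' (gcd_dvd_left a b) (gcd_dvd_right a b)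

lemma isUnit_gcd_of_prime {p b : Z3} (hp : Prime p) (h : ¬ p ∣ b) : IsUnit (gcd p b) := by
  obtain ⟨c, hc⟩ := gcd_dvd_left p b
  rcases hp.irreducible.isUnit_or_isUnit hc with h1 | h1
  · exact h1
  · exfalso
    apply h
    have ha : Associated (gcd p b) p := ⟨h1.unit, by rw [IsUnit.unit_spec]; exact hc.symm⟩
    exact ha.symm.dvd.trans (gcd_dvd_right p b)

lemma isGcdOf_shape {d p q U V : Z3} (h0 : IsUnit (gcd q p)) (h1 : IsUnit (gcd (d * q) U))
    (h2 : IsUnit (gcd V (d * p))) (h3 : IsUnit (gcd V U)) :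
    IsGcdOf d (d * p * U) (d * q * V) := by
  refine ⟨⟨p * U, by ring⟩, ⟨q * V, by ring⟩, fun e hea heb => ?_⟩
  have h := dvd_gcd hea heb
  have c1 : gcd (d * p * U) (d * q * V) ∣ gcd (d * p * U) (d * q) * gcd (d * p * U) V :=
    gcd_mul_dvd_mul_gcd _ _ _
  have c2 : gcd (d * p * U) (d * q) ∣ normalize d * gcd q p * gcd (d * q) U := by
    rw [gcd_comm]
    calc gcd (d * q) (d * p * U) ∣ gcd (d * q) (d * p) * gcd (d * q) U :=
          gcd_mul_dvd_mul_gcd _ _ _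
      _ = normalize d * gcd q p * gcd (d * q) U :=
          congrArg (· * gcd (d * q) U) (@gcd_mul_left _ _ (@UniqueFactorizationMonoid.toStrongNormalizedGCDMonoid Z3 _ _
            UniqueFactorizationMonoid.normalizationMonoid) d q p)
  have c3 : gcd (d * p * U) V ∣ gcd V (d * p) * gcd V U := by
    rw [gcd_comm]; exact gcd_mul_dvd_mul_gcd _ _ _
  have he : e ∣ normalize d * gcd q p * gcd (d * q) U * (gcd V (d * p) * gcd V U) :=
    h.trans (c1.trans (mul_dvd_mul c2 c3))
  have ha : Associated (normalize d * gcd q p * gcd (d * q) U * (gcd V (d * p) * gcd V U)) d :=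
    ((associated_mul_unit_left _ _ (h2.mul h3)).trans
      ((associated_mul_unit_left _ _ h1).trans
        ((associated_mul_unit_left _ _ h0).trans (normalize_associated d))))
  exact he.trans ha.dvd

lemma isUnit_gcd_UV :
    IsUnit (gcd (x ^ 2 * y ^ 2 * z ^ 2 + 1) (x ^ 2 * y * z ^ 2 + 1)) := by
  set g := gcd (x ^ 2 * y ^ 2 * z ^ 2 + 1) (x ^ 2 * y * z ^ 2 + 1) with hg
  have hgV : g ∣ x ^ 2 * y ^ 2 * z ^ 2 + 1 := gcd_dvd_left _ _
  have hgU : g ∣ x ^ 2 * y * z ^ 2 + 1 := gcd_dvd_right _ _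
  have hco : IsCoprime (x ^ 2 * y ^ 1 * z ^ 2) g :=
    (isCoprime_mono (N := x ^ 2 * y * z ^ 2) ⟨x * y * z ^ 2, by ring⟩ ⟨x ^ 2 * z ^ 2, by ring⟩
      ⟨x ^ 2 * y * z, by ring⟩ 2 1 2).of_isCoprime_of_dvd_right hgU
  have h4 : g ∣ x ^ 2 * y ^ 1 * z ^ 2 * (y - 1) := by
    have e : (x ^ 2 * y ^ 2 * z ^ 2 + 1) - (x ^ 2 * y * z ^ 2 + 1)
        = x ^ 2 * y ^ 1 * z ^ 2 * (y - 1) := by ring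
    exact e ▸ dvd_sub hgV hgU
  have h5 : g ∣ y - 1 := hco.symm.dvd_of_dvd_mul_left h4
  have h6 : g ∣ x ^ 2 * z ^ 2 + 1 := by
    have e : (x ^ 2 * y * z ^ 2 + 1) - x ^ 2 * z ^ 2 * (y - 1) = x ^ 2 * z ^ 2 + 1 := by ring
    exact e ▸ dvd_sub hgU (Dvd.dvd.mul_left h5 _)
  obtain ⟨c, hc⟩ := h5
  rcases prime_y_sub_one.irreducible.isUnit_or_isUnit hc with h7 | h7
  · exact h7
  · exfalso
    have hyd : y - 1 ∣ x ^ 2 * z ^ 2 + 1 := by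
      have ha : Associated g (y - 1) := ⟨h7.unit, by rw [IsUnit.unit_spec]; exact hc.symm⟩
      exact ha.symm.dvd.trans h6
    refine not_dvd_of_eval ![1, 1, 1] ?_ ?_ hyd
    · simp [y]
    · simp [x, z]

lemma isUnit_gcd_UV' :
    IsUnit (gcd (x * y ^ 2 * z ^ 2 + 1) (x ^ 2 * y ^ 2 * z + 1)) := by
  set g := gcd (x * y ^ 2 * z ^ 2 + 1) (x ^ 2 * y ^ 2 * z + 1) with hg
  have hgV : g ∣ x * y ^ 2 * z ^ 2 + 1 := gcd_dvd_left _ _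
  have hgU : g ∣ x ^ 2 * y ^ 2 * z + 1 := gcd_dvd_right _ _
  have hco : IsCoprime (x ^ 1 * y ^ 2 * z ^ 1) g :=
    (isCoprime_mono (N := x ^ 2 * y ^ 2 * z) ⟨x * y ^ 2 * z, by ring⟩ ⟨x ^ 2 * y * z, by ring⟩
      ⟨x ^ 2 * y ^ 2, by ring⟩ 1 2 1).of_isCoprime_of_dvd_right hgU
  have h4 : g ∣ x ^ 1 * y ^ 2 * z ^ 1 * (z - x) := by
    have e : (x * y ^ 2 * z ^ 2 + 1) - (x ^ 2 * y ^ 2 * z + 1)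
        = x ^ 1 * y ^ 2 * z ^ 1 * (z - x) := by ring
    exact e ▸ dvd_sub hgV hgU
  have h5 : g ∣ z - x := hco.symm.dvd_of_dvd_mul_left h4
  have h6 : g ∣ x ^ 3 * y ^ 2 + 1 := by
    have e : (x ^ 2 * y ^ 2 * z + 1) - x ^ 2 * y ^ 2 * (z - x) = x ^ 3 * y ^ 2 + 1 := by ring
    exact e ▸ dvd_sub hgU (Dvd.dvd.mul_left h5 _)
  obtain ⟨c, hc⟩ := h5
  rcases prime_z_sub_x.irreducible.isUnit_or_isUnit hc with h7 | h7
  · exact h7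
  · exfalso
    have hyd : z - x ∣ x ^ 3 * y ^ 2 + 1 := by
      have ha : Associated g (z - x) := ⟨h7.unit, by rw [IsUnit.unit_spec]; exact hc.symm⟩
      exact ha.symm.dvd.trans h6
    refine not_dvd_of_eval ![1, 1, 1] ?_ ?_ hyd
    · simp [x, z]
    · simp [x, y]

lemma coprime_shift {K : Type*} [Field K] {a b : K} (h : a ≠ b) (p : Polynomial K) :
    IsCoprime (Polynomial.C a + p) (Polynomial.C b + p) := by
  have h' : a - b ≠ 0 := sub_ne_zero.mpr h
  refine ⟨Polynomial.C (a - b)⁻¹, -Polynomial.C (a - b)⁻¹, ?_⟩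
  have e : Polynomial.C (a - b)⁻¹ * (Polynomial.C a + p)
      + -Polynomial.C (a - b)⁻¹ * (Polynomial.C b + p)
      = Polynomial.C ((a - b)⁻¹ * (a - b)) := by
    rw [Polynomial.C_mul, Polynomial.C_sub]; ring
  rw [e, inv_mul_cancel₀ h', Polynomial.C_1]

lemma coprime_AB {K : Type*} [Field K] {a b : K} (h : 4 * a + (1 + b - a) ^ 2 ≠ 0) :
    IsCoprime (Polynomial.C a + Polynomial.X ^ 2)
      (Polynomial.C b + (Polynomial.X - 1) ^ 2) := by
  refine ⟨Polynomial.C (4 * a + (1 + b - a) ^ 2)⁻¹ * (Polynomial.C (3 + a - b) - 2 * Polynomial.X),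
      Polynomial.C (4 * a + (1 + b - a) ^ 2)⁻¹ * (2 * Polynomial.X + Polynomial.C (1 + b - a)),
      ?_⟩
  have key : (Polynomial.C (3 + a - b) - 2 * Polynomial.X) * (Polynomial.C a + Polynomial.X ^ 2) +
      (2 * Polynomial.X + Polynomial.C (1 + b - a)) * (Polynomial.C b + (Polynomial.X - 1) ^ 2)
      = Polynomial.C (4 * a + (1 + b - a) ^ 2) := by
    simp only [Polynomial.C_add, Polynomial.C_sub, Polynomial.C_mul, Polynomial.C_pow,
      Polynomial.C_1, map_ofNat]
    ring
  have e : Polynomial.C (4 * a + (1 + b - a) ^ 2)⁻¹ * (Polynomial.C (3 + a - b) - 2 * Polynomial.X)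
        * (Polynomial.C a + Polynomial.X ^ 2) +
      Polynomial.C (4 * a + (1 + b - a) ^ 2)⁻¹ * (2 * Polynomial.X + Polynomial.C (1 + b - a))
        * (Polynomial.C b + (Polynomial.X - 1) ^ 2)
      = Polynomial.C (4 * a + (1 + b - a) ^ 2)⁻¹ * Polynomial.C (4 * a + (1 + b - a) ^ 2) := by
    rw [← key]; ring
  rw [e, ← Polynomial.C_mul, inv_mul_cancel₀ h, Polynomial.C_1]

set_option maxHeartbeats 4000000

theorem gcd_not_stable_counterexample :
    P₁ ≠ 0 ∧ P₂ ≠ 0 ∧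
    -- coprime in ℚ(x,y,z)[t]
    (∀ d : Polynomial (FractionRing Z3),
      d ∣ P₁.map (algebraMap Z3 (FractionRing Z3)) →
      d ∣ P₂.map (algebraMap Z3 (FractionRing Z3)) → IsUnit d) ∧
    IsGcdOf (x * y ^ 2 * z) (P₁.eval 0) (P₂.eval 0) ∧
    IsGcdOf (x ^ 2 * y * z ^ 2) (P₁.eval 1) (P₂.eval 1) ∧
    IsGcdOf (x * y * z) (x * y ^ 2 * z) (x ^ 2 * y * z ^ 2) ∧
    ¬ ∃ m : Z3, IsGcdOf (x * y * z) (P₁.eval m) (P₂.eval m) := by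
  refine ⟨?_, ?_, ?_, ?_, ?_, ?_, ?_⟩
  · -- P₁ ≠ 0
    intro h
    have h10 : Polynomial.eval 0 P₁ = x ^ 2 * y ^ 2 * z * (x ^ 2 * y * z ^ 2 + 1) := by
      simp only [P₁, Polynomial.eval_mul, Polynomial.eval_add, Polynomial.eval_pow, Polynomial.eval_sub, Polynomial.eval_C, Polynomial.eval_X, Polynomial.eval_one]
      ring
    rw [h, Polynomial.eval_zero] at h10
    have := congrArg (MvPolynomial.eval (fun _ => (1 : ℤ))) h10.symm
    norm_num [x, y, z] at this
  · -- P₂ ≠ 0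
    intro h
    have h10 : Polynomial.eval 0 P₂ = x * y ^ 2 * z ^ 2 * (x ^ 2 * y ^ 2 * z ^ 2 + 1) := by
      simp only [P₂, Polynomial.eval_mul, Polynomial.eval_add, Polynomial.eval_pow, Polynomial.eval_sub, Polynomial.eval_C, Polynomial.eval_X, Polynomial.eval_one]
      ring
    rw [h, Polynomial.eval_zero] at h10
    have := congrArg (MvPolynomial.eval (fun _ => (1 : ℤ))) h10.symm
    norm_num [x, y, z] at this
  · -- coprime over the fraction field
    intro d hd1 hd2
    set φ := algebraMap Z3 (FractionRing Z3) with hφ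
    have hinj : Function.Injective φ := IsFractionRing.injective Z3 (FractionRing Z3)
    have hmap1 : P₁.map φ = (Polynomial.C (φ (x ^ 2 * y ^ 2 * z)) + Polynomial.X ^ 2) *
        (Polynomial.C (φ (x ^ 2 * y * z ^ 2)) + (Polynomial.X - 1) ^ 2) := by
      simp only [P₁, Polynomial.map_mul, Polynomial.map_add, Polynomial.map_pow,
        Polynomial.map_sub, Polynomial.map_C, Polynomial.map_X, Polynomial.map_one]
    have hmap2 : P₂.map φ = (Polynomial.C (φ (x * y ^ 2 * z ^ 2)) + Polynomial.X ^ 2) *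
        (Polynomial.C (φ (x ^ 2 * y ^ 2 * z ^ 2)) + (Polynomial.X - 1) ^ 2) := by
      simp only [P₂, Polynomial.map_mul, Polynomial.map_add, Polynomial.map_pow,
        Polynomial.map_sub, Polynomial.map_C, Polynomial.map_X, Polynomial.map_one]
    have hAB1 : φ (x ^ 2 * y ^ 2 * z) ≠ φ (x * y ^ 2 * z ^ 2) := by
      intro hh
      have h2 := hinj hh
      have := congrArg (MvPolynomial.eval ![2, 1, 1]) h2
      norm_num [x, y, z, Matrix.cons_val_two, Matrix.vecHead, Matrix.vecTail] at this
    have hAB2 : φ (x ^ 2 * y * z ^ 2) ≠ φ (x ^ 2 * y ^ 2 * z ^ 2) := by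
      intro hh
      have h2 := hinj hh
      have := congrArg (MvPolynomial.eval ![1, 2, 1]) h2
      norm_num [x, y, z, Matrix.cons_val_two, Matrix.vecHead, Matrix.vecTail] at this
    have hr1 : (4 : Z3) * (x ^ 2 * y ^ 2 * z)
        + (1 + x ^ 2 * y ^ 2 * z ^ 2 - x ^ 2 * y ^ 2 * z) ^ 2 ≠ 0 := by
      intro hh
      have := congrArg (MvPolynomial.eval (fun _ => (0 : ℤ))) hh
      norm_num [x, y, z] at this
    have hr1K : 4 * φ (x ^ 2 * y ^ 2 * z)
        + (1 + φ (x ^ 2 * y ^ 2 * z ^ 2) - φ (x ^ 2 * y ^ 2 * z)) ^ 2 ≠ 0 := by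
      have e : 4 * φ (x ^ 2 * y ^ 2 * z)
          + (1 + φ (x ^ 2 * y ^ 2 * z ^ 2) - φ (x ^ 2 * y ^ 2 * z)) ^ 2
          = φ ((4 : Z3) * (x ^ 2 * y ^ 2 * z)
            + (1 + x ^ 2 * y ^ 2 * z ^ 2 - x ^ 2 * y ^ 2 * z) ^ 2) := by
        simp only [map_add, map_mul, map_sub, map_pow, map_one, map_ofNat]
      rw [e]
      exact (map_ne_zero_iff φ hinj).mpr hr1
    have hr2 : (4 : Z3) * (x * y ^ 2 * z ^ 2)
        + (1 + x ^ 2 * y * z ^ 2 - x * y ^ 2 * z ^ 2) ^ 2 ≠ 0 := by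
      intro hh
      have := congrArg (MvPolynomial.eval (fun _ => (0 : ℤ))) hh
      norm_num [x, y, z] at this
    have hr2K : 4 * φ (x * y ^ 2 * z ^ 2)
        + (1 + φ (x ^ 2 * y * z ^ 2) - φ (x * y ^ 2 * z ^ 2)) ^ 2 ≠ 0 := by
      have e : 4 * φ (x * y ^ 2 * z ^ 2)
          + (1 + φ (x ^ 2 * y * z ^ 2) - φ (x * y ^ 2 * z ^ 2)) ^ 2
          = φ ((4 : Z3) * (x * y ^ 2 * z ^ 2)
            + (1 + x ^ 2 * y * z ^ 2 - x * y ^ 2 * z ^ 2) ^ 2) := by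
        simp only [map_add, map_mul, map_sub, map_pow, map_one, map_ofNat]
      rw [e]
      exact (map_ne_zero_iff φ hinj).mpr hr2
    have hc11 := coprime_shift hAB1 (Polynomial.X ^ 2)
    have hc22 := coprime_shift hAB2 ((Polynomial.X - 1) ^ 2)
    have hc12 := coprime_AB hr1K
    have hc21 := (coprime_AB hr2K).symm
    have hco : IsCoprime (P₁.map φ) (P₂.map φ) := by
      rw [hmap1, hmap2]
      exact (hc11.mul_right hc12).mul_left (hc21.mul_right hc22)
    exact hco.isUnit_of_dvd' hd1 hd2
  · -- gcd at 0
    have e1 : Polynomial.eval 0 P₁ = x * y ^ 2 * z * x * (x ^ 2 * y * z ^ 2 + 1) := by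
      simp only [P₁, Polynomial.eval_mul, Polynomial.eval_add, Polynomial.eval_pow, Polynomial.eval_sub, Polynomial.eval_C, Polynomial.eval_X, Polynomial.eval_one]
      ring
    have e2 : Polynomial.eval 0 P₂ = x * y ^ 2 * z * z * (x ^ 2 * y ^ 2 * z ^ 2 + 1) := by
      simp only [P₂, Polynomial.eval_mul, Polynomial.eval_add, Polynomial.eval_pow, Polynomial.eval_sub, Polynomial.eval_C, Polynomial.eval_X, Polynomial.eval_one]
      ring
    rw [e1, e2]
    refine isGcdOf_shape ?_ ?_ ?_ ?_
    · exact isUnit_gcd_of_prime (prime_Xi 2)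
        (not_dvd_of_eval ![1, 1, 0] (by simp [z]) (by simp [x]))
    · rw [show x * y ^ 2 * z * z = x ^ 1 * y ^ 2 * z ^ 2 from by ring]
      exact isUnit_gcd_of_isCoprime (isCoprime_mono (N := x ^ 2 * y * z ^ 2)
        ⟨x * y * z ^ 2, by ring⟩ ⟨x ^ 2 * z ^ 2, by ring⟩ ⟨x ^ 2 * y * z, by ring⟩ 1 2 2)
    · rw [show x * y ^ 2 * z * x = x ^ 2 * y ^ 2 * z ^ 1 from by ring]
      exact isUnit_gcd_of_isCoprime (isCoprime_mono (N := x ^ 2 * y ^ 2 * z ^ 2)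
        ⟨x * y ^ 2 * z ^ 2, by ring⟩ ⟨x ^ 2 * y * z ^ 2, by ring⟩
        ⟨x ^ 2 * y ^ 2 * z, by ring⟩ 2 2 1).symm
    · exact isUnit_gcd_UV
  · -- gcd at 1
    have e1 : Polynomial.eval 1 P₁ = x ^ 2 * y * z ^ 2 * 1 * (x ^ 2 * y ^ 2 * z + 1) := by
      simp only [P₁, Polynomial.eval_mul, Polynomial.eval_add, Polynomial.eval_pow, Polynomial.eval_sub, Polynomial.eval_C, Polynomial.eval_X, Polynomial.eval_one]
      ring
    have e2 : Polynomial.eval 1 P₂ = x ^ 2 * y * z ^ 2 * y * (x * y ^ 2 * z ^ 2 + 1) := by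
      simp only [P₂, Polynomial.eval_mul, Polynomial.eval_add, Polynomial.eval_pow, Polynomial.eval_sub, Polynomial.eval_C, Polynomial.eval_X, Polynomial.eval_one]
      ring
    rw [e1, e2]
    refine isGcdOf_shape ?_ ?_ ?_ ?_
    · exact isUnit_of_dvd_one (gcd_dvd_right y 1)
    · rw [show x ^ 2 * y * z ^ 2 * y = x ^ 2 * y ^ 2 * z ^ 2 from by ring]
      exact isUnit_gcd_of_isCoprime (isCoprime_mono (N := x ^ 2 * y ^ 2 * z)
        ⟨x * y ^ 2 * z, by ring⟩ ⟨x ^ 2 * y * z, by ring⟩ ⟨x ^ 2 * y ^ 2, by ring⟩ 2 2 2)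
    · rw [show x ^ 2 * y * z ^ 2 * 1 = x ^ 2 * y ^ 1 * z ^ 2 from by ring]
      exact isUnit_gcd_of_isCoprime (isCoprime_mono (N := x * y ^ 2 * z ^ 2)
        ⟨y ^ 2 * z ^ 2, by ring⟩ ⟨x * y * z ^ 2, by ring⟩ ⟨x * y ^ 2 * z, by ring⟩ 2 1 2).symm
    · exact isUnit_gcd_UV'
  · -- gcd of the two monomials
    rw [show x * y ^ 2 * z = x * y * z * y * 1 from by ring,
      show x ^ 2 * y * z ^ 2 = x * y * z * (x * z) * 1 from by ring]
    refine isGcdOf_shape ?_ ?_ ?_ ?_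
    · rw [gcd_comm]
      exact isUnit_gcd_of_prime (prime_Xi 1)
        (not_dvd_of_eval ![1, 0, 1] (by simp [y]) (by simp [x, z]))
    · exact isUnit_of_dvd_one (gcd_dvd_right _ 1)
    · exact isUnit_of_dvd_one (gcd_dvd_left 1 _)
    · exact isUnit_of_dvd_one (gcd_dvd_left 1 1)
  · -- no m works
    rintro ⟨m, hm⟩
    obtain ⟨hd1, hd2, hall⟩ := hm
    have hx : Prime x := prime_Xi 0
    have hy : Prime y := prime_Xi 1
    have e1 : Polynomial.eval m P₁
        = (x ^ 2 * y ^ 2 * z + m ^ 2) * (x ^ 2 * y * z ^ 2 + (m - 1) ^ 2) := by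
      simp only [P₁, Polynomial.eval_mul, Polynomial.eval_add, Polynomial.eval_pow, Polynomial.eval_sub, Polynomial.eval_C, Polynomial.eval_X, Polynomial.eval_one]
    have e2 : Polynomial.eval m P₂
        = (x * y ^ 2 * z ^ 2 + m ^ 2) * (x ^ 2 * y ^ 2 * z ^ 2 + (m - 1) ^ 2) := by
      simp only [P₂, Polynomial.eval_mul, Polynomial.eval_add, Polynomial.eval_pow, Polynomial.eval_sub, Polynomial.eval_C, Polynomial.eval_X, Polynomial.eval_one]
    have hnd1 : ¬ (x * x ∣ x * y * z) := by
      intro hdd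
      rw [show x * y * z = x * (y * z) from by ring] at hdd
      have h2 := (mul_dvd_mul_iff_left hx.ne_zero).mp hdd
      exact not_dvd_of_eval ![0, 1, 1] (by simp [x]) (by simp [y, z]) h2
    have hnd2 : ¬ (y * y ∣ x * y * z) := by
      intro hdd
      rw [show x * y * z = y * (x * z) from by ring] at hdd
      have h2 := (mul_dvd_mul_iff_left hy.ne_zero).mp hdd
      exact not_dvd_of_eval ![1, 0, 1] (by simp [y]) (by simp [x, z]) h2
    have hxm : x ∣ m := by
      have hdvd : x ∣ (x ^ 2 * y ^ 2 * z + m ^ 2) * (x ^ 2 * y * z ^ 2 + (m - 1) ^ 2) := by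
        rw [← e1]
        exact dvd_trans ⟨y * z, by ring⟩ hd1
      rcases hx.dvd_or_dvd hdvd with hcase | hcase
      · have h1 : x ∣ m ^ 2 := (dvd_add_right ⟨x * y ^ 2 * z, by ring⟩).mp hcase
        exact hx.dvd_of_dvd_pow h1
      · exfalso
        have h1 : x ∣ (m - 1) ^ 2 := (dvd_add_right ⟨x * y * z ^ 2, by ring⟩).mp hcase
        have h2 : x ∣ m - 1 := hx.dvd_of_dvd_pow h1
        have h3 : x * x ∣ (m - 1) ^ 2 := by rw [pow_two]; exact mul_dvd_mul h2 h2
        have h4 : x * x ∣ Polynomial.eval m P₁ := by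
          rw [e1]
          exact Dvd.dvd.mul_left (dvd_add ⟨y * z ^ 2, by ring⟩ h3) _
        have h5 : x * x ∣ Polynomial.eval m P₂ := by
          rw [e2]
          exact Dvd.dvd.mul_left (dvd_add ⟨y ^ 2 * z ^ 2, by ring⟩ h3) _
        exact hnd1 (hall (x * x) h4 h5)
    have hym : y ∣ m - 1 := by
      have hdvd : y ∣ (x ^ 2 * y ^ 2 * z + m ^ 2) * (x ^ 2 * y * z ^ 2 + (m - 1) ^ 2) := by
        rw [← e1]
        exact dvd_trans ⟨x * z, by ring⟩ hd1
      rcases hy.dvd_or_dvd hdvd with hcase | hcase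
      · exfalso
        have h1 : y ∣ m ^ 2 := (dvd_add_right ⟨x ^ 2 * y * z, by ring⟩).mp hcase
        have h2 : y ∣ m := hy.dvd_of_dvd_pow h1
        have h3 : y * y ∣ m ^ 2 := by rw [pow_two]; exact mul_dvd_mul h2 h2
        have h4 : y * y ∣ Polynomial.eval m P₁ := by
          rw [e1]
          exact Dvd.dvd.mul_right (dvd_add ⟨x ^ 2 * z, by ring⟩ h3) _
        have h5 : y * y ∣ Polynomial.eval m P₂ := by
          rw [e2]
          exact Dvd.dvd.mul_right (dvd_add ⟨x * z ^ 2, by ring⟩ h3) _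
        exact hnd2 (hall (y * y) h4 h5)
      · have h1 : y ∣ (m - 1) ^ 2 := (dvd_add_right ⟨x ^ 2 * z ^ 2, by ring⟩).mp hcase
        exact hy.dvd_of_dvd_pow h1
    obtain ⟨a2, ha2⟩ := hxm
    obtain ⟨b2, hb2⟩ := hym
    have key : x * a2 - y * b2 = 1 := by rw [← ha2, ← hb2]; ring
    have := congrArg (MvPolynomial.eval (fun _ => (0 : ℤ))) key
    norm_num [x, y] at this

end GcdCounterexample
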